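/- Let ω ∈ (0,1), n ≥ 1, and consider the box B_{n,2} = (1/(2n), 1-1/(2n)]². If f(du₁, du₂) is a measure on B_{n,2} with density bounded by K/(φ(Φ^{-1}(u₁))·φ(Φ^{-1}(u₂))) with respect to Lebesgue measure, then ∫_{B_{n,2}} g_ω(u₁, u₂, c_n, …, d_n) |f(du₁, du₂)| ≤ K₁ |Φ^{-1}(1/(2n))|² / (2n)^ω for some constant K₁, and this bound tends to 0 as n → ∞, where c_n = 1/(2n), d_n = 1 - 1/(2n). -/

import Mathlib

open MeasureTheory Set Filter

/-- The standard normal density. -/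
noncomputable def stdPhi (x : ℝ) : ℝ := Real.exp (-x^2/2) / Real.sqrt (2*Real.pi)

/-- The standard normal cumulative distribution function. -/
noncomputable def stdCDF (x : ℝ) : ℝ := ∫ t in Set.Iic x, stdPhi t

lemma stdPhi_pos (x : ℝ) : 0 < stdPhi x := by
  apply div_pos (Real.exp_pos _) (Real.sqrt_pos.2 (by positivity))

lemma stdPhi_cont : Continuous stdPhi := by
  unfold stdPhi; fun_prop

lemma stdPhi_eq (x : ℝ) : stdPhi x = (Real.sqrt (2*Real.pi))⁻¹ * Real.exp (-(1/2) * x^2) := by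
  unfold stdPhi; rw [inv_mul_eq_div]; ring_nf

lemma stdPhi_integrable : Integrable stdPhi := by
  have := (integrable_exp_neg_mul_sq (by norm_num : (0:ℝ) < 1/2)).const_mul (Real.sqrt (2*Real.pi))⁻¹
  refine this.congr (ae_of_all _ fun x => ?_)
  rw [stdPhi_eq]

lemma stdPhi_integral : ∫ x, stdPhi x = 1 := by
  simp_rw [stdPhi_eq]
  rw [integral_const_mul, integral_gaussian]
  rw [← Real.sqrt_inv, ← Real.sqrt_mul (by positivity)]
  norm_num
  field_simp

lemma stdCDF_hasDerivAt (x : ℝ) : HasDerivAt stdCDF (stdPhi x) x := by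
  have key : ∀ y : ℝ, stdCDF y = stdCDF 0 + ∫ t in (0:ℝ)..y, stdPhi t := by
    intro y
    rw [← intervalIntegral.integral_Iic_sub_Iic (stdPhi_integrable.integrableOn)
      (stdPhi_integrable.integrableOn)]
    unfold stdCDF; ring
  have hd : HasDerivAt (fun y => stdCDF 0 + ∫ t in (0:ℝ)..y, stdPhi t) (stdPhi x) x := by
    have := intervalIntegral.integral_hasDerivAt_right
      (stdPhi_integrable.intervalIntegrable (a := 0) (b := x))
      (stdPhi_cont.stronglyMeasurableAtFilter _ _)
      (stdPhi_cont.continuousAt)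
    exact this.const_add _
  exact hd.congr_deriv rfl |>.congr_of_eventuallyEq (Filter.Eventually.of_forall fun y => (key y))

lemma stdCDF_strictMono : StrictMono stdCDF := by
  apply strictMono_of_deriv_pos
  intro x
  rw [(stdCDF_hasDerivAt x).deriv]
  exact stdPhi_pos x

lemma stdCDF_pos (x : ℝ) : 0 < stdCDF x := by
  unfold stdCDF
  rw [setIntegral_pos_iff_support_of_nonneg_ae
    (ae_of_all _ fun t => (stdPhi_pos t).le) (stdPhi_integrable.integrableOn)]
  have : Function.support stdPhi = Set.univ := by
    ext t; simp [Function.support, (stdPhi_pos t).ne']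
  rw [this, Set.univ_inter]
  simp [Real.volume_Iic]

lemma stdCDF_add_Ioi (x : ℝ) : stdCDF x + ∫ t in Set.Ioi x, stdPhi t = 1 := by
  rw [← stdPhi_integral]
  unfold stdCDF
  rw [← intervalIntegral.integral_Iic_add_Ioi (stdPhi_integrable.integrableOn)
    (stdPhi_integrable.integrableOn)]

lemma stdCDF_lt_one (x : ℝ) : stdCDF x < 1 := by
  have h := stdCDF_add_Ioi x
  have hpos : 0 < ∫ t in Set.Ioi x, stdPhi t := by
    rw [setIntegral_pos_iff_support_of_nonneg_ae
      (ae_of_all _ fun t => (stdPhi_pos t).le) (stdPhi_integrable.integrableOn)]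
    have : Function.support stdPhi = Set.univ := by
      ext t; simp [Function.support, (stdPhi_pos t).ne']
    rw [this, Set.univ_inter]
    simp [Real.volume_Ioi]
  linarith

lemma stdCDF_neg (x : ℝ) : stdCDF (-x) = 1 - stdCDF x := by
  have : stdCDF (-x) = ∫ t in Set.Ioi x, stdPhi t := by
    unfold stdCDF
    rw [show (Set.Iic (-x)) = Set.Iic (-x) from rfl]
    have : ∀ t : ℝ, stdPhi t = stdPhi (-t) := by
      intro t; unfold stdPhi; ring_nf
    calc ∫ t in Set.Iic (-x), stdPhi t = ∫ t in Set.Iic (-x), stdPhi (-t) := by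
          exact setIntegral_congr_fun measurableSet_Iic fun t _ => this t
      _ = ∫ t in Set.Ioi x, stdPhi t := by
          rw [integral_comp_neg_Iic]; norm_num
  linarith [stdCDF_add_Ioi x]

lemma stdCDF_zero : stdCDF 0 = 1/2 := by
  have := stdCDF_neg 0
  rw [neg_zero] at this
  linarith

lemma stdCDF_tail {x : ℝ} (hx : 0 ≤ x) :
    stdCDF (-x) ≤ Real.sqrt 2 * Real.exp (-x^2/4) := by
  set B : ℝ → ℝ := fun t => (Real.sqrt (2*Real.pi))⁻¹ * (Real.exp (-x^2/4) * Real.exp (-(1/4) * t^2))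
    with hB
  have hBint : Integrable B := by
    have := ((integrable_exp_neg_mul_sq (by norm_num : (0:ℝ) < 1/4)).const_mul
      (Real.exp (-x^2/4))).const_mul (Real.sqrt (2*Real.pi))⁻¹
    refine this.congr (ae_of_all _ fun t => ?_)
    show _ = B t
    rw [hB]
  have h1 : stdCDF (-x) ≤ ∫ t in Set.Iic (-x), B t := by
    apply setIntegral_mono_on stdPhi_integrable.integrableOn hBint.integrableOn measurableSet_Iic
    intro t ht
    simp only [Set.mem_Iic] at ht
    rw [stdPhi_eq, hB]
    have hx2 : x^2 ≤ t^2 := by nlinarith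
    have : -(1/2) * t^2 ≤ -x^2/4 + -(1/4) * t^2 := by nlinarith
    calc (Real.sqrt (2*Real.pi))⁻¹ * Real.exp (-(1/2) * t^2)
        ≤ (Real.sqrt (2*Real.pi))⁻¹ * Real.exp (-x^2/4 + -(1/4) * t^2) := by
          gcongr
      _ = (Real.sqrt (2*Real.pi))⁻¹ * (Real.exp (-x^2/4) * Real.exp (-(1/4) * t^2)) := by
          rw [Real.exp_add]
  have h2 : ∫ t in Set.Iic (-x), B t ≤ ∫ t, B t := by
    apply setIntegral_le_integral hBint
    exact ae_of_all _ fun t => by rw [hB]; positivity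
  have h3 : ∫ t, B t = Real.sqrt 2 * Real.exp (-x^2/4) := by
    rw [hB]
    simp only
    rw [integral_const_mul, integral_const_mul, integral_gaussian]
    have : Real.sqrt (Real.pi / (1/4)) = Real.sqrt 2 * Real.sqrt (2*Real.pi) := by
      rw [← Real.sqrt_mul (by norm_num)]
      congr 1; ring
    rw [this]
    have hne : Real.sqrt (2*Real.pi) ≠ 0 := by positivity
    field_simp
  linarith

section Inv
variable {Φinv : ℝ → ℝ}
  (hinv : ∀ v ∈ Set.Ioo (0:ℝ) 1, stdCDF (Φinv v) = v)
  (hinv' : ∀ x : ℝ, Φinv (stdCDF x) = x)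

include hinv in
lemma phiinv_continuousAt {v : ℝ} (hv : v ∈ Set.Ioo (0:ℝ) 1) : ContinuousAt Φinv v := by
  rw [Metric.continuousAt_iff]
  intro ε hε
  set x := Φinv v with hx
  have hxv : stdCDF x = v := hinv v hv
  have h1 : stdCDF (x - ε) < v := hxv ▸ stdCDF_strictMono (by linarith)
  have h2 : v < stdCDF (x + ε) := hxv ▸ stdCDF_strictMono (by linarith)
  refine ⟨min (v - stdCDF (x - ε)) (stdCDF (x + ε) - v), by simp [h1, h2, sub_pos], ?_⟩
  intro u hu
  rw [Real.dist_eq] at hu ⊢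
  have hu1 : stdCDF (x - ε) < u := by
    have := abs_lt.1 (lt_of_lt_of_le hu (min_le_left _ _))
    linarith [this.1]
  have hu2 : u < stdCDF (x + ε) := by
    have := abs_lt.1 (lt_of_lt_of_le hu (min_le_right _ _))
    linarith [this.2]
  have hu01 : u ∈ Set.Ioo (0:ℝ) 1 :=
    ⟨lt_trans (stdCDF_pos _) hu1, lt_trans hu2 (stdCDF_lt_one _)⟩
  have hcu : stdCDF (Φinv u) = u := hinv u hu01
  have hl : x - ε < Φinv u := by
    by_contra hc
    push_neg at hc
    have := stdCDF_strictMono.monotone hc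
    rw [hcu] at this; linarith
  have hr : Φinv u < x + ε := by
    by_contra hc
    push_neg at hc
    have := stdCDF_strictMono.monotone hc
    rw [hcu] at this; linarith
  rw [abs_lt]; constructor <;> linarith

include hinv hinv' in
lemma phiinv_hasDerivAt {v : ℝ} (hv : v ∈ Set.Ioo (0:ℝ) 1) :
    HasDerivAt Φinv (stdPhi (Φinv v))⁻¹ v := by
  apply HasDerivAt.of_local_left_inverse (phiinv_continuousAt hinv hv)
    (stdCDF_hasDerivAt (Φinv v)) (stdPhi_pos _).ne'
  filter_upwards [Ioo_mem_nhds hv.1 hv.2] with y hy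
  exact hinv y hy

include hinv hinv' in
lemma phiinv_ftc {c : ℝ} (hc : 0 < c) (hc2 : c ≤ 1/2) :
    ∫ u in Set.Ioc c (1-c), (stdPhi (Φinv u))⁻¹ = Φinv (1-c) - Φinv c := by
  have hsub : Set.uIcc c (1-c) ⊆ Set.Ioo (0:ℝ) 1 := by
    rw [Set.uIcc_of_le (by linarith)]
    intro u hu
    exact ⟨lt_of_lt_of_le hc hu.1, lt_of_le_of_lt hu.2 (by linarith)⟩
  have hcont : ContinuousOn (fun u => (stdPhi (Φinv u))⁻¹) (Set.uIcc c (1-c)) := by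
    intro u hu
    apply ContinuousAt.continuousWithinAt
    exact ((stdPhi_cont.continuousAt.comp (phiinv_continuousAt hinv (hsub hu))).inv₀
      (stdPhi_pos _).ne')
  have := intervalIntegral.integral_eq_sub_of_hasDerivAt
    (f := Φinv) (f' := fun u => (stdPhi (Φinv u))⁻¹) (a := c) (b := 1-c)
    (fun u hu => phiinv_hasDerivAt hinv hinv' (hsub hu))
    (hcont.intervalIntegrable)
  rw [← this, intervalIntegral.integral_of_le (by linarith)]

include hinv hinv' in
lemma phiinv_symm {c : ℝ} (hc : c ∈ Set.Ioo (0:ℝ) 1) : Φinv (1-c) = -Φinv c := by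
  have h1 : stdCDF (-Φinv c) = 1 - c := by rw [stdCDF_neg, hinv c hc]
  have := hinv' (-Φinv c)
  rw [h1] at this
  exact this

include hinv in
lemma phiinv_nonpos {c : ℝ} (hc : c ∈ Set.Ioo (0:ℝ) 1) (hc2 : c ≤ 1/2) : Φinv c ≤ 0 := by
  by_contra hcon
  push_neg at hcon
  have := stdCDF_strictMono hcon
  rw [hinv c hc, stdCDF_zero] at this
  linarith

end Inv

lemma phiinv_tail {Φinv : ℝ → ℝ}
    (hinv : ∀ v ∈ Set.Ioo (0:ℝ) 1, stdCDF (Φinv v) = v)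
    {n : ℕ} (hn : 1 ≤ n) :
    |Φinv (1/(2*(n:ℝ)))| ≤ 2 * Real.sqrt (Real.log (4*(n:ℝ))) := by
  have hn1 : (1:ℝ) ≤ n := by exact_mod_cast hn
  set c : ℝ := 1/(2*(n:ℝ)) with hcdef
  have hc : 0 < c := by positivity
  have hc2 : c ≤ 1/2 := by
    rw [hcdef, div_le_div_iff₀ (by positivity) (by norm_num)]
    linarith
  have hcmem : c ∈ Set.Ioo (0:ℝ) 1 := ⟨hc, by linarith⟩
  have hlog : 0 ≤ Real.log (4*(n:ℝ)) := Real.log_nonneg (by linarith)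
  set x : ℝ := 2 * Real.sqrt (Real.log (4*(n:ℝ))) with hxdef
  have hx0 : 0 ≤ x := by positivity
  rw [abs_of_nonpos (phiinv_nonpos hinv hcmem hc2)]
  by_contra hcon
  push_neg at hcon
  have h1 : Φinv c ≤ -x := by linarith
  have h2 : stdCDF (Φinv c) ≤ stdCDF (-x) := stdCDF_strictMono.monotone h1
  rw [hinv c hcmem] at h2
  have h3 : stdCDF (-x) ≤ Real.sqrt 2 * Real.exp (-x^2/4) := stdCDF_tail hx0
  have hx2 : x^2 = 4 * Real.log (4*(n:ℝ)) := by
    rw [hxdef, mul_pow, Real.sq_sqrt hlog]; ring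
  have h4 : Real.exp (-x^2/4) = (4*(n:ℝ))⁻¹ := by
    rw [hx2]
    rw [show -(4 * Real.log (4*(n:ℝ)))/4 = -Real.log (4*(n:ℝ)) by ring]
    rw [Real.exp_neg, Real.exp_log (by positivity)]
  have hs2 : Real.sqrt 2 < 2 := by
    nlinarith [Real.sq_sqrt (by norm_num : (0:ℝ) ≤ 2), Real.sqrt_nonneg 2]
  have : c ≤ Real.sqrt 2 * (4*(n:ℝ))⁻¹ := by rw [← h4]; linarith
  have hlt : Real.sqrt 2 * (4*(n:ℝ))⁻¹ < c := by
    rw [hcdef]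
    rw [div_eq_mul_inv, one_mul]
    have h4n : (0:ℝ) < 4*(n:ℝ) := by positivity
    have : (4*(n:ℝ))⁻¹ = (2*(n:ℝ))⁻¹ / 2 := by
      field_simp; ring
    rw [this]
    calc Real.sqrt 2 * ((2*(n:ℝ))⁻¹ / 2) < 2 * ((2*(n:ℝ))⁻¹ / 2) := by
          apply mul_lt_mul_of_pos_right hs2 (by positivity)
      _ = (2*(n:ℝ))⁻¹ := by ring
  linarith

/-- The weight function
`g_ω(u) = (min{ min_k u_k, 1 - min_{j≠1} u_j, …, 1 - min_{j≠d} u_j })^ω`. -/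
noncomputable def gweight (d : ℕ) (ω : ℝ) (u : Fin d → ℝ) : ℝ :=
  (min (⨅ k, u k) (⨅ i : Fin d, (1 - ⨅ j : {j : Fin d // j ≠ i}, u j))) ^ ω

/-- For `ω ∈ (0,1)`: if a measure on `B_{n,2} = (1/(2n), 1-1/(2n)]²` has a density bounded by
`K/(φ(Φ⁻¹(u₁))φ(Φ⁻¹(u₂)))`, then the integral of `g_ω(u₁,u₂,c_n,…,d_n)` against its absolute
value is at most `K₁|Φ⁻¹(1/(2n))|²/(2n)^ω` for some constant `K₁ > 0`, a bound tending to `0`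
(here the remaining coordinates are fixed at `c_n = 1/(2n)` or `d_n = 1-1/(2n)`,
at least one of them being `c_n`). -/
theorem stmt19 (d : ℕ) (ω : ℝ) (hω : ω ∈ Set.Ioo (0:ℝ) 1)
    (Φinv : ℝ → ℝ)
    (hinv : ∀ v ∈ Set.Ioo (0:ℝ) 1, stdCDF (Φinv v) = v)
    (hinv' : ∀ x : ℝ, Φinv (stdCDF x) = x)
    (w : ℕ → Fin (d+3) → ℝ)
    (hw : ∀ n : ℕ, 1 ≤ n → ∀ k : Fin (d+3), 2 ≤ (k:ℕ) →
      w n k = 1/(2*(n:ℝ)) ∨ w n k = 1 - 1/(2*(n:ℝ)))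
    (hw0 : ∀ n : ℕ, 1 ≤ n → ∃ k : Fin (d+3), 2 ≤ (k:ℕ) ∧ w n k = 1/(2*(n:ℝ)))
    (K : ℝ) (hK : 0 < K)
    (h : ℕ → ℝ → ℝ → ℝ)
    (hh : ∀ n : ℕ, 1 ≤ n → ∀ u₁ u₂ : ℝ,
      u₁ ∈ Set.Ioc (1/(2*(n:ℝ))) (1 - 1/(2*(n:ℝ))) →
      u₂ ∈ Set.Ioc (1/(2*(n:ℝ))) (1 - 1/(2*(n:ℝ))) →
        |h n u₁ u₂| ≤ K / (stdPhi (Φinv u₁) * stdPhi (Φinv u₂))) :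
    ∃ K₁ > (0:ℝ),
      (∀ n : ℕ, 1 ≤ n →
        (∫ p in (Set.Ioc (1/(2*(n:ℝ))) (1 - 1/(2*(n:ℝ)))
              ×ˢ Set.Ioc (1/(2*(n:ℝ))) (1 - 1/(2*(n:ℝ)))),
            gweight (d+3) ω (Function.update (Function.update (w n) 0 (p : ℝ × ℝ).1) 1 p.2)
              * |h n p.1 p.2|)
          ≤ K₁ * |Φinv (1/(2*(n:ℝ)))|^2 / (2*(n:ℝ)) ^ ω) ∧
      Tendsto (fun n : ℕ => K₁ * |Φinv (1/(2*(n:ℝ)))|^2 / (2*(n:ℝ)) ^ ω)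
        atTop (nhds 0) := by
  obtain ⟨hω0, hω1⟩ := hω
  refine ⟨4*K, by linarith, ?_, ?_⟩
  · intro n hn
    have hn1 : (1:ℝ) ≤ n := by exact_mod_cast hn
    set c : ℝ := 1/(2*(n:ℝ)) with hcdef
    have hc : 0 < c := by positivity
    have hc2 : c ≤ 1/2 := by
      rw [hcdef, div_le_div_iff₀ (by positivity) (by norm_num)]; linarith
    have hc1 : c < 1 := by linarith
    have hcmem : c ∈ Set.Ioo (0:ℝ) 1 := ⟨hc, hc1⟩
    set S := Set.Ioc c (1-c) with hS
    have hrpow : (0:ℝ) < (2*(n:ℝ)) ^ ω := Real.rpow_pos_of_pos (by positivity) ω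
    set f1 : ℝ → ℝ := fun u => c ^ ω * K * (stdPhi (Φinv u))⁻¹ with hf1
    set f2 : ℝ → ℝ := fun u => (stdPhi (Φinv u))⁻¹ with hf2
    have hsub : Set.Icc c (1-c) ⊆ Set.Ioo (0:ℝ) 1 := fun u hu =>
      ⟨lt_of_lt_of_le hc hu.1, lt_of_le_of_lt hu.2 (by linarith)⟩
    have hcont2 : ContinuousOn f2 (Set.Icc c (1-c)) := fun u hu =>
      ContinuousAt.continuousWithinAt
        ((stdPhi_cont.continuousAt.comp (phiinv_continuousAt hinv (hsub hu))).inv₀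
          (stdPhi_pos _).ne')
    have hint2 : IntegrableOn f2 S := (hcont2.integrableOn_Icc).mono_set Set.Ioc_subset_Icc_self
    have hint1 : IntegrableOn f1 S := hint2.const_mul _
    have hGint : IntegrableOn (fun p : ℝ × ℝ => f1 p.1 * f2 p.2) (S ×ˢ S) := by
      rw [IntegrableOn, Measure.volume_eq_prod, ← Measure.prod_restrict]
      exact hint1.mul_prod hint2
    have hI2 : ∫ u in S, f2 u = 2 * |Φinv c| := by
      rw [hS, hf2]
      rw [phiinv_ftc hinv hinv' hc hc2, phiinv_symm hinv hinv' hcmem,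
        abs_of_nonpos (phiinv_nonpos hinv hcmem hc2)]
      ring
    have hI1 : ∫ u in S, f1 u = c ^ ω * K * (2 * |Φinv c|) := by
      have : ∫ u in S, f1 u = (c ^ ω * K) * ∫ u in S, f2 u := by
        simp only [hf1, hf2]
        exact MeasureTheory.integral_const_mul _ _
      rw [this, hI2]
    -- pointwise bound
    have hpt : ∀ p : ℝ × ℝ, p ∈ S ×ˢ S →
        gweight (d+3) ω (Function.update (Function.update (w n) 0 p.1) 1 p.2)
          * |h n p.1 p.2| ≤ f1 p.1 * f2 p.2 := by
      rintro ⟨p1, p2⟩ ⟨hp1, hp2⟩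
      simp only at hp1 hp2 ⊢
      set u : Fin (d+3) → ℝ := Function.update (Function.update (w n) 0 p1) 1 p2 with hu
      have hne01 : (0 : Fin (d+3)) ≠ 1 := by
        intro hcon
        have := congrArg Fin.val hcon
        rw [Fin.val_zero, Fin.val_one] at this
        omega
      have hu1 : u 1 = p2 := by rw [hu]; simp [Function.update_apply]
      have hu0 : u 0 = p1 := by rw [hu]; simp [Function.update_apply, hne01]
      have huk : ∀ k : Fin (d+3), 2 ≤ (k:ℕ) → u k = w n k := by
        intro k hk
        have hk1 : k ≠ 1 := by
          intro hcon; rw [hcon, Fin.val_one] at hk; omega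
        have hk0 : k ≠ 0 := by
          intro hcon; rw [hcon, Fin.val_zero] at hk; omega
        rw [hu]; simp [Function.update_apply, hk1, hk0]
      have hrange : ∀ k : Fin (d+3), c ≤ u k ∧ u k ≤ 1-c := by
        intro k
        by_cases h1 : k = 1
        · rw [h1, hu1]; exact ⟨hp2.1.le, hp2.2⟩
        by_cases h0 : k = 0
        · rw [h0, hu0]; exact ⟨hp1.1.le, hp1.2⟩
        · have hk2 : 2 ≤ (k:ℕ) := by
            rcases Nat.lt_or_ge (k:ℕ) 2 with hlt | hge
            · interval_cases hkv : (k:ℕ)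
              · exact absurd (Fin.ext hkv) h0
              · exact absurd (Fin.ext (by rw [hkv, Fin.val_one])) h1
            · exact hge
          rw [huk k hk2]
          rcases hw n hn k hk2 with hcase | hcase <;> rw [hcase]
          · exact ⟨le_refl _, by linarith⟩
          · exact ⟨by linarith, le_refl _⟩
      have hbdd : BddBelow (Set.range u) := (Set.finite_range u).bddBelow
      have hA_le : (⨅ k, u k) ≤ c := by
        obtain ⟨k₀, hk₀2, hk₀c⟩ := hw0 n hn
        calc (⨅ k, u k) ≤ u k₀ := ciInf_le hbdd k₀
          _ = c := by rw [huk k₀ hk₀2, hk₀c]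
      have hA_ge : c ≤ ⨅ k, u k := le_ciInf fun k => (hrange k).1
      have hB_ge : c ≤ ⨅ i : Fin (d+3), (1 - ⨅ j : {j : Fin (d+3) // j ≠ i}, u j) := by
        apply le_ciInf
        intro i
        have hex : ∃ j : Fin (d+3), j ≠ i := by
          by_cases hi : i = 0
          · exact ⟨1, by rw [hi]; exact fun hcon => hne01 hcon.symm⟩
          · exact ⟨0, fun hcon => hi hcon.symm⟩
        obtain ⟨j, hj⟩ := hex
        have : Nonempty {j : Fin (d+3) // j ≠ i} := ⟨⟨j, hj⟩⟩
        have hle : (⨅ j : {j : Fin (d+3) // j ≠ i}, u j) ≤ u j :=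
          ciInf_le ((Set.finite_range _).bddBelow) (⟨j, hj⟩ : {j : Fin (d+3) // j ≠ i})
        have := (hrange j).2
        linarith
      have hgw : gweight (d+3) ω u ≤ c ^ ω := by
        unfold gweight
        apply Real.rpow_le_rpow (le_min (by linarith) (by linarith))
          ((min_le_left _ _).trans hA_le) hω0.le
      have hhb := hh n hn p1 p2 hp1 hp2
      have hφ1 := stdPhi_pos (Φinv p1)
      have hφ2 := stdPhi_pos (Φinv p2)
      calc gweight (d+3) ω u * |h n p1 p2|
          ≤ c ^ ω * (K / (stdPhi (Φinv p1) * stdPhi (Φinv p2))) :=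
            mul_le_mul hgw hhb (abs_nonneg _) (Real.rpow_nonneg hc.le ω)
        _ = f1 p1 * f2 p2 := by
            rw [hf1, hf2]
            simp only
            rw [div_eq_mul_inv, mul_inv]
            ring
    have hfinal : c ^ ω * K * (2 * |Φinv c|) * (2 * |Φinv c|)
        = 4*K * |Φinv c|^2 / (2*(n:ℝ)) ^ ω := by
      have hcpow : c ^ ω = ((2*(n:ℝ)) ^ ω)⁻¹ := by
        rw [hcdef, one_div, Real.inv_rpow (by positivity)]
      rw [hcpow, pow_two]
      field_simp
      ring
    by_cases hInt : IntegrableOn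
        (fun p : ℝ × ℝ => gweight (d+3) ω (Function.update (Function.update (w n) 0 p.1) 1 p.2)
          * |h n p.1 p.2|) (S ×ˢ S)
    · have hmono := setIntegral_mono_on hInt hGint
        (measurableSet_Ioc.prod measurableSet_Ioc) hpt
      have hval : ∫ p in S ×ˢ S, f1 p.1 * f2 p.2 = (∫ u in S, f1 u) * ∫ u in S, f2 u := by
        rw [Measure.volume_eq_prod, setIntegral_prod_mul]
      rw [hval, hI1, hI2] at hmono
      calc (∫ p in S ×ˢ S,
            gweight (d+3) ω (Function.update (Function.update (w n) 0 p.1) 1 p.2)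
              * |h n p.1 p.2|) ≤ c ^ ω * K * (2 * |Φinv c|) * (2 * |Φinv c|) := hmono
        _ = 4*K * |Φinv c|^2 / (2*(n:ℝ)) ^ ω := hfinal
    · rw [integral_undef hInt]
      positivity
  · -- Tendsto
    have t1 : Tendsto (fun x : ℝ => Real.log 2 / x ^ ω) atTop (nhds 0) :=
      tendsto_const_nhds.div_atTop (tendsto_rpow_atTop hω0)
    have t2 : Tendsto (fun x : ℝ => Real.log x / x ^ ω) atTop (nhds 0) :=
      (isLittleO_log_rpow_atTop hω0).tendsto_div_nhds_zero
    have t3 : Tendsto (fun x : ℝ => Real.log (2*x) / x ^ ω) atTop (nhds 0) := by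
      have := t1.add t2
      rw [add_zero] at this
      apply this.congr'
      filter_upwards [eventually_gt_atTop (0:ℝ)] with x hx
      rw [Real.log_mul (by norm_num) hx.ne']
      ring
    have hcomp : Tendsto (fun n : ℕ => 2*(n:ℝ)) atTop atTop :=
      (tendsto_natCast_atTop_atTop).const_mul_atTop (by norm_num)
    have t4 : Tendsto (fun n : ℕ => Real.log (4*(n:ℝ)) / (2*(n:ℝ)) ^ ω) atTop (nhds 0) := by
      have := t3.comp hcomp
      apply this.congr
      intro n
      simp only [Function.comp]
      congr 2
      ring
    have t5 : Tendsto (fun n : ℕ => 16*K * (Real.log (4*(n:ℝ)) / (2*(n:ℝ)) ^ ω))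
        atTop (nhds 0) := by
      have := t4.const_mul (16*K)
      rwa [mul_zero] at this
    refine squeeze_zero' ?_ ?_ t5
    · filter_upwards with n
      apply div_nonneg (by positivity) (Real.rpow_nonneg (by positivity) ω)
    · filter_upwards [eventually_ge_atTop 1] with n hn
      have hn1 : (1:ℝ) ≤ n := by exact_mod_cast hn
      have hlog : 0 ≤ Real.log (4*(n:ℝ)) := Real.log_nonneg (by linarith)
      have ht := phiinv_tail hinv hn
      have hsq : |Φinv (1/(2*(n:ℝ)))|^2 ≤ 4 * Real.log (4*(n:ℝ)) := by
        calc |Φinv (1/(2*(n:ℝ)))|^2 ≤ (2 * Real.sqrt (Real.log (4*(n:ℝ))))^2 := by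
              apply pow_le_pow_left₀ (abs_nonneg _) ht
          _ = 4 * Real.log (4*(n:ℝ)) := by
              rw [mul_pow, Real.sq_sqrt hlog]; norm_num
      have hrpow : (0:ℝ) < (2*(n:ℝ)) ^ ω := Real.rpow_pos_of_pos (by positivity) ω
      rw [show 16*K * (Real.log (4*(n:ℝ)) / (2*(n:ℝ)) ^ ω)
          = 16*K * Real.log (4*(n:ℝ)) / (2*(n:ℝ)) ^ ω by ring]
      rw [div_le_div_iff₀ hrpow hrpow]
      have : 4*K * |Φinv (1/(2*(n:ℝ)))|^2 ≤ 16*K * Real.log (4*(n:ℝ)) := by nlinarith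
      nlinarith
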